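/- Every vertex of the polytope {(P(y|x))_{x∈X,y∈{1,2,3}}, (λ_y)_{y∈{1,2,3}} : P(y|x) ≥ 0, P(y|x) ≤ λ_y, Σ_y P(y|x) = 1 for each x, Σ_y λ_y = c} with c = 2 has at least one λ_y = 0. -/

import Mathlib

/-- The channel polytope: conditional probabilities P(y|x) together with bounds λ_y. -/
def channelPolytope (X : Type) [Fintype X] (c : ℝ) :
    Set ((X → Fin 3 → ℝ) × (Fin 3 → ℝ)) :=
  {v | (∀ x y, 0 ≤ v.1 x y) ∧ (∀ x y, v.1 x y ≤ v.2 y) ∧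
       (∀ x, ∑ y, v.1 x y = 1) ∧ (∑ y, v.2 y = c)}

open Classical in
/-- Perturbation direction for the channel polytope. -/
noncomputable def Dir {X : Type} [Fintype X] (P : X → Fin 3 → ℝ) (L e : Fin 3 → ℝ)
    (x : X) (y : Fin 3) : ℝ :=
  if P x y = L y then e y
  else if P x y = 0 then 0
  else -(∑ z, if P x z = L z then e z else 0) /
        (∑ z, if P x z = L z then (0:ℝ) else if P x z = 0 then 0 else 1)

lemma dir_neg {X : Type} [Fintype X] (P : X → Fin 3 → ℝ) (L e e' : Fin 3 → ℝ)
    (he' : ∀ z, e' z = -(e z)) (x : X) (y : Fin 3) :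
    Dir P L e' x y = -(Dir P L e x y) := by
  classical
  have hs : (∑ z, if P x z = L z then e' z else 0)
      = -(∑ z, if P x z = L z then e z else 0) := by
    rw [← Finset.sum_neg_distrib]
    exact Finset.sum_congr rfl fun z _ => by split_ifs <;> simp [he']
  unfold Dir
  split_ifs with h1 h2
  · exact he' y
  · exact neg_zero.symm
  · rw [hs]; ring

set_option maxHeartbeats 1000000 in
theorem vertex_even_case_has_zero_lambda (X : Type) [Fintype X]
    (v : (X → Fin 3 → ℝ) × (Fin 3 → ℝ))
    (hv : v ∈ Set.extremePoints ℝ (channelPolytope X 2)) :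
    ∃ y, v.2 y = 0 := by
  classical
  by_contra hcon
  push_neg at hcon
  obtain ⟨hP0, hPL, hP1, hL2⟩ := hv.1
  have hext := hv.2
  set P := v.1 with hPdef
  set L := v.2 with hLdef
  have key : ∀ w : (X → Fin 3 → ℝ) × (Fin 3 → ℝ),
      v + w ∈ channelPolytope X 2 → v - w ∈ channelPolytope X 2 → w = 0 := by
    intro w h1 h2
    have hseg : v ∈ openSegment ℝ (v + w) (v - w) :=
      ⟨1/2, 1/2, by norm_num, by norm_num, by norm_num, by module⟩
    have h' := hext h1 h2 hseg
    calc w = (v + w) - v := by abel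
      _ = 0 := by rw [h']; abel
  rcases isEmpty_or_nonempty X with hX | hX
  · -- X empty: perturb lambda freely
    have h1 : v + (0, ![1, -1, 0]) ∈ channelPolytope X 2 := by
      refine ⟨fun x => (hX.elim x), fun x => (hX.elim x), fun x => (hX.elim x), ?_⟩
      simp only [Fin.sum_univ_three] at hL2 ⊢
      simp only [Prod.snd_add, Pi.add_apply, Matrix.cons_val_zero, Matrix.cons_val_one,
        Matrix.head_cons, Matrix.cons_val_two, Matrix.tail_cons]
      linarith
    have h2 : v - (0, ![1, -1, 0]) ∈ channelPolytope X 2 := by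
      refine ⟨fun x => (hX.elim x), fun x => (hX.elim x), fun x => (hX.elim x), ?_⟩
      simp only [Fin.sum_univ_three] at hL2 ⊢
      simp only [Prod.snd_sub, Pi.sub_apply, Matrix.cons_val_zero, Matrix.cons_val_one,
        Matrix.head_cons, Matrix.cons_val_two, Matrix.tail_cons]
      linarith
    have h0 := key _ h1 h2
    have : (![1, -1, 0] : Fin 3 → ℝ) 0 = 0 := congrFun (congrArg Prod.snd h0) 0
    norm_num at this
  · -- X nonempty
    obtain ⟨x₀⟩ := hX
    have hLpos : ∀ y, 0 < L y :=
      fun y => lt_of_le_of_ne ((hP0 x₀ y).trans (hPL x₀ y)) (Ne.symm (hcon y))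
    have hL2e : L 0 + L 1 + L 2 = 2 := by
      have := hL2; simpa [Fin.sum_univ_three] using this
    -- choose e
    set e : Fin 3 → ℝ :=
      if L 0 = 1 then ![0, 1, -1] else if L 1 = 1 then ![1, 0, -1] else ![1, -1, 0] with he_def
    have he_sum : e 0 + e 1 + e 2 = 0 := by
      rw [he_def]; split_ifs <;> norm_num [Matrix.cons_val_two, Matrix.tail_cons, Matrix.head_cons]
    have he_bd : ∀ y, -1 ≤ e y ∧ e y ≤ 1 := by
      intro y; rw [he_def]; split_ifs <;> fin_cases y <;> norm_num
    have he_z : ∀ z, L z = 1 → e z = 0 := by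
      intro z hz
      rw [he_def]
      split_ifs with h1 h2
      · fin_cases z
        · norm_num
        · exact absurd (show L 2 = 0 by simp at hz ⊢; linarith) (hcon 2)
        · exact absurd (show L 1 = 0 by simp at hz ⊢; linarith) (hcon 1)
      · fin_cases z
        · exact absurd (by simpa using hz) h1
        · norm_num
        · exact absurd (show L 0 = 0 by simp at hz ⊢; linarith) (hcon 0)
      · fin_cases z
        · exact absurd (by simpa using hz) h1
        · exact absurd (by simpa using hz) h2
        · norm_num
    have he_one : e 0 = 1 ∨ e 1 = 1 := by
      rw [he_def]; split_ifs <;> simp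
    -- slack
    set sl : X × Fin 3 → ℝ := fun p =>
      if P p.1 p.2 = L p.2 then L p.2 else if P p.1 p.2 = 0 then L p.2
      else min (P p.1 p.2) (L p.2 - P p.1 p.2) with hsl_def
    have hsl_pos : ∀ p, 0 < sl p := by
      intro p; rw [hsl_def]; dsimp only; split_ifs with h1 h2
      · exact hLpos _
      · exact hLpos _
      · exact lt_min (lt_of_le_of_ne (hP0 _ _) (Ne.symm h2))
          (sub_pos.mpr (lt_of_le_of_ne (hPL p.1 p.2) h1))
    have hne : (Finset.univ : Finset (X × Fin 3)).Nonempty := ⟨(x₀, 0), Finset.mem_univ _⟩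
    set t : ℝ := (Finset.univ.inf' hne sl) / 4 with ht_def
    have ht_pos : 0 < t := by
      rw [ht_def]
      have h : 0 < Finset.univ.inf' hne sl := by
        rw [Finset.lt_inf'_iff]
        exact fun p _ => hsl_pos p
      linarith
    have ht4 : ∀ p : X × Fin 3, 4 * t ≤ sl p := by
      intro p
      have h := Finset.inf'_le sl (Finset.mem_univ p)
      rw [ht_def]; linarith
    -- the core membership lemma
    have core : ∀ e' : Fin 3 → ℝ,
        (∀ y, -1 ≤ e' y ∧ e' y ≤ 1) → (e' 0 + e' 1 + e' 2 = 0) →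
        (∀ z, L z = 1 → e' z = 0) →
        ((fun x y => P x y + t * Dir P L e' x y), (fun y => L y + t * e' y)) ∈
          channelPolytope X 2 := by
      intro e' hbd hsum hz
      have hdb : ∀ x y, |Dir P L e' x y| ≤ 3 := by
        intro x y
        unfold Dir
        split_ifs with h1 h2
        · rw [abs_le]; exact ⟨by linarith [(hbd y).1], by linarith [(hbd y).2]⟩
        · simp
        · have hn1 : (1:ℝ) ≤ ∑ z, (if P x z = L z then (0:ℝ) else if P x z = 0 then 0 else 1) := by
            have hle : ∀ z ∈ Finset.univ,
                (0:ℝ) ≤ (if P x z = L z then (0:ℝ) else if P x z = 0 then 0 else 1) := by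
              intro z _; split_ifs <;> norm_num
            have h := Finset.single_le_sum hle (Finset.mem_univ y)
            rwa [if_neg h1, if_neg h2] at h
          have hT : |∑ z, (if P x z = L z then e' z else 0)| ≤ 3 := by
            calc |∑ z, (if P x z = L z then e' z else 0)|
                ≤ ∑ z, |if P x z = L z then e' z else 0| :=
                  Finset.abs_sum_le_sum_abs _ _
              _ ≤ ∑ _z : Fin 3, (1:ℝ) := by
                  apply Finset.sum_le_sum
                  intro z _
                  split_ifs with h
                  · rw [abs_le]; exact ⟨(hbd z).1, (hbd z).2⟩
                  · norm_num
              _ = 3 := by simp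
          rw [abs_div, abs_neg]
          have hpos : (0:ℝ) < ∑ z, (if P x z = L z then (0:ℝ) else if P x z = 0 then 0 else 1) := by
            linarith
          rw [abs_of_pos hpos]
          exact le_trans (div_le_self (abs_nonneg _) hn1) hT
      have hd_sum : ∀ x, Dir P L e' x 0 + Dir P L e' x 1 + Dir P L e' x 2 = 0 := by
        intro x
        have hP1x : P x 0 + P x 1 + P x 2 = 1 := by
          have := hP1 x; simpa [Fin.sum_univ_three] using this
        unfold Dir
        simp only [Fin.sum_univ_three]
        split_ifs <;>
          first
            | ring1
            | linarith
            | (have h := hz 0 (by linarith); linarith)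
            | (have h := hz 1 (by linarith); linarith)
            | (have h := hz 2 (by linarith); linarith)
      refine ⟨?_, ?_, ?_, ?_⟩
      · intro x y
        dsimp only
        have h4 := ht4 (x, y)
        rw [hsl_def] at h4
        dsimp only at h4
        by_cases h1 : P x y = L y
        · rw [if_pos h1] at h4
          unfold Dir
          rw [if_pos h1, h1]
          have h5 : -t ≤ t * e' y := by nlinarith [(hbd y).1, ht_pos.le]
          linarith
        · by_cases h2 : P x y = 0
          · unfold Dir
            rw [if_neg h1, if_pos h2, mul_zero, h2, add_zero]
          · rw [if_neg h1, if_neg h2] at h4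
            have habs := hdb x y
            have hminP : min (P x y) (L y - P x y) ≤ P x y := min_le_left _ _
            have h5 : -(3*t) ≤ t * Dir P L e' x y := by
              nlinarith [(abs_le.mp habs).1, ht_pos.le]
            linarith
      · intro x y
        dsimp only
        have h4 := ht4 (x, y)
        rw [hsl_def] at h4
        dsimp only at h4
        by_cases h1 : P x y = L y
        · unfold Dir
          rw [if_pos h1, h1]
        · by_cases h2 : P x y = 0
          · rw [if_neg h1, if_pos h2] at h4
            unfold Dir
            rw [if_neg h1, if_pos h2, mul_zero, h2, add_zero]
            have h5 : -t ≤ t * e' y := by nlinarith [(hbd y).1, ht_pos.le]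
            linarith
          · rw [if_neg h1, if_neg h2] at h4
            have habs := hdb x y
            have hminL : min (P x y) (L y - P x y) ≤ L y - P x y := min_le_right _ _
            have h5 : t * Dir P L e' x y ≤ 3*t := by
              nlinarith [(abs_le.mp habs).2, ht_pos.le]
            have h6 : -t ≤ t * e' y := by nlinarith [(hbd y).1, ht_pos.le]
            linarith
      · intro x
        have hP1x : P x 0 + P x 1 + P x 2 = 1 := by
          have := hP1 x; simpa [Fin.sum_univ_three] using this
        simp only [Fin.sum_univ_three]
        linear_combination hP1x + t * hd_sum x
      · simp only [Fin.sum_univ_three]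
        linear_combination hL2e + t * hsum
    -- apply core to e and -e
    have h1 := core e he_bd he_sum he_z
    have h2 := core (fun z => -(e z))
      (fun y => ⟨by show -1 ≤ -(e y); linarith [(he_bd y).2], by show -(e y) ≤ 1; linarith [(he_bd y).1]⟩)
      (by show -(e 0) + -(e 1) + -(e 2) = 0; linarith)
      (fun z hzz => by show -(e z) = 0; rw [he_z z hzz]; ring)
    set w : (X → Fin 3 → ℝ) × (Fin 3 → ℝ) :=
      ((fun x y => t * Dir P L e x y), fun y => t * e y) with hw_def
    have hvw1 : v + w = ((fun x y => P x y + t * Dir P L e x y), fun y => L y + t * e y) := rfl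
    have hvw2 : v - w =
        ((fun x y => P x y + t * Dir P L (fun z => -(e z)) x y), fun y => L y + t * (-(e y))) := by
      refine Prod.ext ?_ ?_
      · funext x y
        show P x y - t * Dir P L e x y = P x y + t * Dir P L (fun z => -(e z)) x y
        rw [dir_neg P L e _ (fun z => rfl)]; ring
      · funext y
        show L y - t * e y = L y + t * (-(e y))
        ring
    have hw0 := key w (by rw [hvw1]; exact h1) (by rw [hvw2]; exact h2)
    rcases he_one with h | h
    · have h0 : t * e 0 = 0 := congrFun (congrArg Prod.snd hw0) 0
      rw [h, mul_one] at h0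
      exact absurd h0 (ne_of_gt ht_pos)
    · have h0 : t * e 1 = 0 := congrFun (congrArg Prod.snd hw0) 1
      rw [h, mul_one] at h0
      exact absurd h0 (ne_of_gt ht_pos)
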